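/- For every n ≥ 1 and every nondecreasing initial vector ρ0 ∈ ℝ^n (i.e. ρ0_1 ≤ ρ0_2 ≤ ⋯ ≤ ρ0_n), the closure of the convex hull of the attainable set A(ρ0, E_P) for the path graph P_n equals the convex hull of the finite set {S_A : A ⊆ {1,…,n−1}} of 2^{n−1} points. -/

import Mathlib

/-- The averaging operator `B_{ij}` : averages the populations at vertices `i` and `j`,
leaving the other components unchanged. -/
noncomputable def avg {n : ℕ} (i j : Fin n) (ρ : Fin n → ℝ) : Fin n → ℝ :=
  fun k => if k = i ∨ k = j then (ρ i + ρ j) / 2 else ρ k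

/-- The attainable set `A(ρ0, E)`: all vectors obtained from `ρ0` by applying a finite
sequence of operators `B_{ij}` with `{i,j} ∈ E` (and `i ≠ j`). -/
def attainable (n : ℕ) (E : Set (Sym2 (Fin n))) (ρ0 : Fin n → ℝ) : Set (Fin n → ℝ) :=
  {ρ | ∃ L : List (Fin n × Fin n),
    (∀ p ∈ L, p.1 ≠ p.2 ∧ s(p.1, p.2) ∈ E) ∧
    ρ = L.foldl (fun σ p => avg p.1 p.2 σ) ρ0}

/-- The edge set of the path graph `P_n` (0-based: edges `{i, i+1}` for `i+1 < n`). -/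
def pathEdges (n : ℕ) : Set (Sym2 (Fin n)) :=
  {e | ∃ i : ℕ, ∃ h : i + 1 < n, e = s(⟨i, Nat.lt_of_succ_lt h⟩, ⟨i + 1, h⟩)}

/-- Start of the block of index `j` determined by `A` (0-based: `i ∈ A` means indices
`i` and `i+1` lie in the same block): the least `a` with `[a, j) ⊆ A`. -/
def blockStart (A : Finset ℕ) (j : ℕ) : ℕ :=
  Nat.findGreatest (fun a => a ≠ 0 ∧ (a - 1) ∉ A) j

/-- End of the block of index `j` determined by `A`: the greatest `b ≤ n - 1`
with `[j, b) ⊆ A`. -/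
def blockEnd (n : ℕ) (A : Finset ℕ) (j : ℕ) : ℕ :=
  Nat.findGreatest (fun b => ∀ m ∈ Finset.Ico j b, m ∈ A) (n - 1)

/-- The point `S_A`: on each block of consecutive indices determined by `A`, its
components all equal the average of the components of `ρ0` over that block. -/
noncomputable def SA {n : ℕ} (ρ0 : Fin n → ℝ) (A : Finset ℕ) : Fin n → ℝ :=
  fun j =>
    (∑ m ∈ Finset.Icc (blockStart A (j : ℕ)) (blockEnd n A (j : ℕ)),
        if h : m < n then ρ0 ⟨m, h⟩ else 0) /
      ((blockEnd n A (j : ℕ) - blockStart A (j : ℕ) + 1 : ℕ) : ℝ)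

/-- Apply the adjacent averaging operator `B_{p,p+1}` (0-based) if it exists. -/
noncomputable def stepAt (n : ℕ) (p : ℕ) (ρ : Fin n → ℝ) : Fin n → ℝ :=
  if h : p + 1 < n then avg ⟨p, Nat.lt_of_succ_lt h⟩ ⟨p + 1, h⟩ ρ else ρ


namespace AvgPath

variable {n : ℕ}

/-- entry as a function of a natural index, 0 outside. -/
noncomputable def ent (x : Fin n → ℝ) (k : ℕ) : ℝ := if h : k < n then x ⟨k, h⟩ else 0

/-- prefix sum -/
noncomputable def pref (x : Fin n → ℝ) (i : ℕ) : ℝ := ∑ k ∈ Finset.range i, ent x k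

def Kset (n : ℕ) (ρ0 : Fin n → ℝ) : Set (Fin n → ℝ) :=
  {x | (∀ i, 0 < i → i < n → 2 * pref x i ≤ pref x (i+1) + pref x (i-1)) ∧
       (∀ i, pref ρ0 i ≤ pref x i) ∧ pref x n = pref ρ0 n}

lemma ent_lt (x : Fin n → ℝ) {k : ℕ} (h : k < n) : ent x k = x ⟨k, h⟩ := dif_pos h

lemma pref_zero (x : Fin n → ℝ) : pref x 0 = 0 := by simp [pref]

lemma pref_succ (x : Fin n → ℝ) (i : ℕ) : pref x (i+1) = pref x i + ent x i := by
  simp [pref, Finset.sum_range_succ]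

lemma pref_stab (x : Fin n → ℝ) {i : ℕ} (h : n ≤ i) : pref x i = pref x n := by
  unfold pref
  refine (Finset.sum_subset ?_ ?_).symm
  · exact Finset.range_subset_range.2 h
  · intro k _ hk
    simp only [Finset.mem_range, not_lt] at hk
    simp [ent, Nat.not_lt.2 (le_trans hk (le_refl k)), dif_neg (not_lt.2 hk)]

lemma monotone_of_adj {x : Fin n → ℝ}
    (h : ∀ k (hk : k + 1 < n), x ⟨k, Nat.lt_of_succ_lt hk⟩ ≤ x ⟨k+1, hk⟩) : Monotone x := by
  intro a b hab
  obtain ⟨a, ha⟩ := a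
  obtain ⟨b, hb⟩ := b
  simp only [Fin.mk_le_mk] at hab
  induction b with
  | zero =>
    have : a = 0 := Nat.le_zero.1 hab
    subst this; exact le_refl _
  | succ m ih =>
    rcases Nat.lt_or_ge a (m+1) with hlt | hge
    · have ham : a ≤ m := Nat.lt_succ_iff.1 hlt
      calc x ⟨a, ha⟩ ≤ x ⟨m, Nat.lt_of_succ_lt hb⟩ := ih (Nat.lt_of_succ_lt hb) ham
        _ ≤ x ⟨m+1, hb⟩ := h m hb
    · have : a = m + 1 := le_antisymm hab hge
      subst this; exact le_refl _

/-- adjacent increments are differences of prefix sums -/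
lemma ent_eq_pref (x : Fin n → ℝ) (i : ℕ) : ent x i = pref x (i+1) - pref x i := by
  rw [pref_succ]; ring

lemma mono_of_K {ρ0 x : Fin n → ℝ} (hx : x ∈ Kset n ρ0) : Monotone x := by
  apply monotone_of_adj
  intro k hk
  have h := hx.1 (k+1) (Nat.succ_pos _) hk
  have e1 := ent_eq_pref x k
  have e2 := ent_eq_pref x (k+1)
  rw [ent_lt x (Nat.lt_of_succ_lt hk)] at e1
  rw [ent_lt x hk] at e2
  simp only [Nat.add_sub_cancel] at h
  linarith

end AvgPath


namespace AvgPath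

variable {n : ℕ}

section AvgStep

variable (x : Fin n → ℝ) {p : ℕ} (hp : p + 1 < n)

lemma avg_comm (i j : Fin n) : avg i j = avg j i := by
  funext ρ k
  simp only [avg]
  exact if_congr or_comm (by ring) rfl

/-- the result of one adjacent averaging step, seen through `ent` -/
lemma ent_avg_ne {k : ℕ} (hk1 : k ≠ p) (hk2 : k ≠ p + 1) :
    ent (avg ⟨p, Nat.lt_of_succ_lt hp⟩ ⟨p+1, hp⟩ x) k = ent x k := by
  unfold ent
  split
  · next h =>
    simp only [avg]
    rw [if_neg]
    push_neg
    constructor <;> intro hc <;> [exact hk1 (by simpa [Fin.ext_iff] using hc);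
      exact hk2 (by simpa [Fin.ext_iff] using hc)]
  · rfl

lemma ent_avg_p :
    ent (avg ⟨p, Nat.lt_of_succ_lt hp⟩ ⟨p+1, hp⟩ x) p = (ent x p + ent x (p+1)) / 2 := by
  rw [ent_lt _ (Nat.lt_of_succ_lt hp), ent_lt _ (Nat.lt_of_succ_lt hp), ent_lt _ hp]
  simp [avg]

lemma ent_avg_psucc :
    ent (avg ⟨p, Nat.lt_of_succ_lt hp⟩ ⟨p+1, hp⟩ x) (p+1) = (ent x p + ent x (p+1)) / 2 := by
  rw [ent_lt _ hp, ent_lt _ (Nat.lt_of_succ_lt hp), ent_lt _ hp]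
  simp [avg]

lemma pref_avg_le {i : ℕ} (hi : i ≤ p) :
    pref (avg ⟨p, Nat.lt_of_succ_lt hp⟩ ⟨p+1, hp⟩ x) i = pref x i := by
  unfold pref
  apply Finset.sum_congr rfl
  intro k hk
  rw [Finset.mem_range] at hk
  exact ent_avg_ne x hp (by omega) (by omega)

lemma pref_avg_psucc :
    pref (avg ⟨p, Nat.lt_of_succ_lt hp⟩ ⟨p+1, hp⟩ x) (p+1)
      = (pref x p + pref x (p+2)) / 2 := by
  rw [pref_succ, pref_avg_le x hp (le_refl p), ent_avg_p x hp,
    pref_succ, pref_succ]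
  ring

lemma pref_avg_ge {i : ℕ} (hi : p + 2 ≤ i) :
    pref (avg ⟨p, Nat.lt_of_succ_lt hp⟩ ⟨p+1, hp⟩ x) i = pref x i := by
  have base : pref (avg ⟨p, Nat.lt_of_succ_lt hp⟩ ⟨p+1, hp⟩ x) (p+2) = pref x (p+2) := by
    rw [pref_succ, pref_succ, pref_avg_le x hp (le_refl p), ent_avg_p x hp, ent_avg_psucc x hp,
      pref_succ, pref_succ]
    ring
  obtain ⟨m, rfl⟩ := Nat.exists_eq_add_of_le hi
  induction m with
  | zero => exact base
  | succ m ih =>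
    have : p + 2 + (m + 1) = (p + 2 + m) + 1 := by ring
    rw [this, pref_succ, pref_succ, ih (by omega), ent_avg_ne x hp (by omega) (by omega)]

lemma avg_mem_K {ρ0 : Fin n → ℝ} (hx : x ∈ Kset n ρ0) :
    avg ⟨p, Nat.lt_of_succ_lt hp⟩ ⟨p+1, hp⟩ x ∈ Kset n ρ0 := by
  obtain ⟨hconv, hlow, htot⟩ := hx
  set y := avg ⟨p, Nat.lt_of_succ_lt hp⟩ ⟨p+1, hp⟩ x with hy
  have hyp : ∀ i, i ≠ p + 1 → pref y i = pref x i := by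
    intro i hi
    rcases le_or_gt i p with h | h
    · exact pref_avg_le x hp h
    · exact pref_avg_ge x hp (by omega)
  have hkey : pref y (p+1) = (pref x p + pref x (p+2)) / 2 := pref_avg_psucc x hp
  have hmid : pref x (p+1) ≤ pref y (p+1) := by
    have := hconv (p+1) (Nat.succ_pos _) hp
    simp only [Nat.add_sub_cancel] at this
    rw [hkey]; linarith
  refine ⟨?_, ?_, ?_⟩
  · intro i hi0 hin
    rcases Nat.lt_trichotomy i (p+1) with h | h | h
    · -- i ≤ p
      rw [hyp i (by omega), hyp (i-1) (by omega)]
      have hx1 : pref x (i+1) ≤ pref y (i+1) := by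
        rcases eq_or_ne (i+1) (p+1) with he | hne
        · rw [he]; exact hmid
        · exact le_of_eq (hyp _ hne).symm
      have := hconv i hi0 hin
      linarith
    · -- i = p+1 : equality
      subst h
      rw [hkey, hyp (p+1+1) (by omega), hyp (p+1-1) (by omega)]
      simp only [Nat.add_sub_cancel]
      linarith
    · -- i ≥ p+2
      rw [hyp i (by omega), hyp (i+1) (by omega)]
      have hx1 : pref x (i-1) ≤ pref y (i-1) := by
        rcases eq_or_ne (i-1) (p+1) with he | hne
        · rw [he]; exact hmid
        · exact le_of_eq (hyp _ hne).symm
      have := hconv i hi0 hin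
      linarith
  · intro i
    rcases eq_or_ne i (p+1) with rfl | hne
    · exact le_trans (hlow _) hmid
    · rw [hyp i hne]; exact hlow i
  · rw [hyp n (by omega)]; exact htot

end AvgStep

lemma rho0_mem_K {ρ0 : Fin n → ℝ} (hρ0 : Monotone ρ0) : ρ0 ∈ Kset n ρ0 := by
  refine ⟨?_, fun i => le_refl _, rfl⟩
  intro i hi0 hin
  have e1 := ent_eq_pref ρ0 (i-1)
  have e2 := ent_eq_pref ρ0 i
  have hstep : ent ρ0 (i-1) ≤ ent ρ0 i := by
    rw [ent_lt ρ0 (show i - 1 < n by omega), ent_lt ρ0 hin]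
    exact hρ0 (by simp only [Fin.mk_le_mk]; omega)
  have : i - 1 + 1 = i := by omega
  rw [this] at e1
  linarith

lemma avg_edge_mem_K {ρ0 x : Fin n → ℝ} (hx : x ∈ Kset n ρ0) {q : Fin n × Fin n}
    (hq : s(q.1, q.2) ∈ pathEdges n) : avg q.1 q.2 x ∈ Kset n ρ0 := by
  obtain ⟨i, h, he⟩ := hq
  rw [Sym2.eq_iff] at he
  rcases he with ⟨h1, h2⟩ | ⟨h1, h2⟩
  · rw [h1, h2]; exact avg_mem_K x h hx
  · rw [h1, h2, avg_comm]; exact avg_mem_K x h hx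

lemma foldl_mem_K {ρ0 : Fin n → ℝ} (L : List (Fin n × Fin n))
    (hL : ∀ p ∈ L, p.1 ≠ p.2 ∧ s(p.1, p.2) ∈ pathEdges n) :
    ∀ x ∈ Kset n ρ0, L.foldl (fun σ p => avg p.1 p.2 σ) x ∈ Kset n ρ0 := by
  induction L with
  | nil => intro x hx; exact hx
  | cons q L ih =>
    intro x hx
    simp only [List.foldl_cons]
    exact ih (fun q' hq' => hL q' (List.mem_cons_of_mem _ hq')) _
      (avg_edge_mem_K hx (hL q (List.mem_cons_self)).2)

lemma attainable_subset_K {ρ0 : Fin n → ℝ} (hρ0 : Monotone ρ0) :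
    attainable n (pathEdges n) ρ0 ⊆ Kset n ρ0 := by
  rintro ρ ⟨L, hL, rfl⟩
  exact foldl_mem_K L hL ρ0 (rho0_mem_K hρ0)

end AvgPath


namespace AvgPath

variable {n : ℕ}

lemma pref_comb (x y : Fin n → ℝ) (a b : ℝ) (i : ℕ) :
    pref (a • x + b • y) i = a * pref x i + b * pref y i := by
  unfold pref
  rw [Finset.mul_sum, Finset.mul_sum, ← Finset.sum_add_distrib]
  refine Finset.sum_congr rfl fun k _ => ?_
  unfold ent
  by_cases h : k < n <;> simp [h]

lemma K_convex (ρ0 : Fin n → ℝ) : Convex ℝ (Kset n ρ0) := by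
  rintro x ⟨hx1, hx2, hx3⟩ y ⟨hy1, hy2, hy3⟩ a b ha hb hab
  refine ⟨?_, ?_, ?_⟩
  · intro i h0 hin
    simp only [pref_comb]
    have h1 := hx1 i h0 hin
    have h2 := hy1 i h0 hin
    nlinarith [mul_le_mul_of_nonneg_left h1 ha, mul_le_mul_of_nonneg_left h2 hb]
  · intro i
    simp only [pref_comb]
    have h1 := mul_le_mul_of_nonneg_left (hx2 i) ha
    have h2 := mul_le_mul_of_nonneg_left (hy2 i) hb
    have h3 : a * pref ρ0 i + b * pref ρ0 i = pref ρ0 i := by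
      linear_combination pref ρ0 i * hab
    linarith
  · simp only [pref_comb, hx3, hy3]
    linear_combination pref ρ0 n * hab

lemma pref_continuous (i : ℕ) : Continuous (fun x : Fin n → ℝ => pref x i) := by
  unfold pref
  apply continuous_finset_sum
  intro k _
  by_cases h : k < n <;> simp only [ent, h, dif_pos, dif_neg, not_false_iff]
  · exact continuous_apply _
  · exact continuous_const

lemma K_closed (ρ0 : Fin n → ℝ) : IsClosed (Kset n ρ0) := by
  have h1 : IsClosed {x : Fin n → ℝ |
      ∀ i, 0 < i → i < n → 2 * pref x i ≤ pref x (i+1) + pref x (i-1)} := by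
    have he : {x : Fin n → ℝ | ∀ i, 0 < i → i < n → 2 * pref x i ≤ pref x (i+1) + pref x (i-1)}
        = ⋂ i : ℕ, {x | 0 < i → i < n → 2 * pref x i ≤ pref x (i+1) + pref x (i-1)} := by
      ext x; simp only [Set.mem_setOf_eq, Set.mem_iInter]
    rw [he]
    refine isClosed_iInter fun i => ?_
    by_cases h0 : 0 < i ∧ i < n
    · have he2 : {x : Fin n → ℝ | 0 < i → i < n → 2 * pref x i ≤ pref x (i+1) + pref x (i-1)}
          = {x | 2 * pref x i ≤ pref x (i+1) + pref x (i-1)} := by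
        ext x; simp [h0.1, h0.2]
      rw [he2]
      exact isClosed_le (continuous_const.mul (pref_continuous i))
        ((pref_continuous (i+1)).add (pref_continuous (i-1)))
    · have he2 : {x : Fin n → ℝ | 0 < i → i < n → 2 * pref x i ≤ pref x (i+1) + pref x (i-1)}
          = Set.univ := by
        ext x
        simp only [Set.mem_setOf_eq, Set.mem_univ, iff_true]
        intro hi1 hi2; exact absurd ⟨hi1, hi2⟩ h0
      rw [he2]; exact isClosed_univ
  have h2 : IsClosed {x : Fin n → ℝ | ∀ i, pref ρ0 i ≤ pref x i} := by
    have he : {x : Fin n → ℝ | ∀ i, pref ρ0 i ≤ pref x i}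
        = ⋂ i : ℕ, {x | pref ρ0 i ≤ pref x i} := by
      ext x; simp only [Set.mem_setOf_eq, Set.mem_iInter]
    rw [he]
    exact isClosed_iInter fun i => isClosed_le continuous_const (pref_continuous i)
  have h3 : IsClosed {x : Fin n → ℝ | pref x n = pref ρ0 n} :=
    isClosed_eq (pref_continuous n) continuous_const
  exact h1.inter (h2.inter h3)

lemma K_bounds {ρ0 x : Fin n → ℝ} (hn : 0 < n) (hx : x ∈ Kset n ρ0) (j : Fin n) :
    x j ∈ Set.Icc (ρ0 ⟨0, hn⟩) (ρ0 ⟨n-1, by omega⟩) := by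
  have hmono := mono_of_K hx
  obtain ⟨hc, hlow, htot⟩ := hx
  constructor
  · have e0 : pref x 1 = x ⟨0, hn⟩ := by
      rw [pref_succ, pref_zero, ent_lt x hn]; ring
    have e0' : pref ρ0 1 = ρ0 ⟨0, hn⟩ := by
      rw [pref_succ, pref_zero, ent_lt ρ0 hn]; ring
    calc ρ0 ⟨0, hn⟩ = pref ρ0 1 := e0'.symm
      _ ≤ pref x 1 := hlow 1
      _ = x ⟨0, hn⟩ := e0
      _ ≤ x j := hmono (by simp [Fin.le_def])
  · have hn1 : n - 1 < n := by omega
    have hsn : n - 1 + 1 = n := by omega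
    have e1 : x ⟨n-1, hn1⟩ = pref x n - pref x (n-1) := by
      have := ent_eq_pref x (n-1)
      rw [hsn, ent_lt x hn1] at this; linarith
    have e1' : ρ0 ⟨n-1, hn1⟩ = pref ρ0 n - pref ρ0 (n-1) := by
      have := ent_eq_pref ρ0 (n-1)
      rw [hsn, ent_lt ρ0 hn1] at this; linarith
    calc x j ≤ x ⟨n-1, hn1⟩ := hmono (by simp [Fin.le_def]; omega)
      _ = pref x n - pref x (n-1) := e1
      _ ≤ pref ρ0 n - pref ρ0 (n-1) := by
          have := hlow (n-1); linarith [htot.le]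
      _ = ρ0 ⟨n-1, hn1⟩ := e1'.symm

lemma K_compact {ρ0 : Fin n → ℝ} (hn : 0 < n) : IsCompact (Kset n ρ0) := by
  refine IsCompact.of_isClosed_subset
    (isCompact_univ_pi fun _ : Fin n => isCompact_Icc
      (a := ρ0 ⟨0, hn⟩) (b := ρ0 ⟨n-1, by omega⟩)) (K_closed ρ0) ?_
  intro x hx
  rw [Set.mem_univ_pi]
  exact fun j => K_bounds hn hx j

end AvgPath


namespace AvgPath

variable {n : ℕ} (A : Finset ℕ) (j : ℕ)

lemma bs_le : blockStart A j ≤ j := Nat.findGreatest_le _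

lemma bs_mem : ∀ m, blockStart A j ≤ m → m < j → m ∈ A := by
  intro m ham hmj
  have h := (Nat.findGreatest_eq_iff (m := blockStart A j)
    (P := fun a => a ≠ 0 ∧ (a - 1) ∉ A) (k := j)).1 rfl
  have := h.2.2 (show blockStart A j < m + 1 by omega) (by omega)
  push_neg at this
  simpa using this (by omega)

lemma bs_boundary (h0 : blockStart A j ≠ 0) : blockStart A j - 1 ∉ A := by
  have h := (Nat.findGreatest_eq_iff (m := blockStart A j)
    (P := fun a => a ≠ 0 ∧ (a - 1) ∉ A) (k := j)).1 rfl
  exact (h.2.1 h0).2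

lemma be_le : blockEnd n A j ≤ n - 1 := Nat.findGreatest_le _

lemma le_be (hj : j ≤ n - 1) : j ≤ blockEnd n A j :=
  Nat.le_findGreatest hj (by simp)

lemma be_mem (hj : j ≤ n - 1) : ∀ m, j ≤ m → m < blockEnd n A j → m ∈ A := by
  intro m hjm hmb
  have hspec := Nat.findGreatest_spec (m := j)
    (P := fun b => ∀ m ∈ Finset.Ico j b, m ∈ A) hj (by simp)
  exact hspec m (Finset.mem_Ico.2 ⟨hjm, hmb⟩)

lemma be_not_mem (hj : j ≤ n - 1) (hA : A ⊆ Finset.range (n - 1)) : blockEnd n A j ∉ A := by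
  rcases eq_or_lt_of_le (be_le A j (n := n)) with he | hlt
  · intro hc
    have := hA hc
    rw [Finset.mem_range, he] at this
    omega
  · have h := (Nat.findGreatest_eq_iff (m := blockEnd n A j)
      (P := fun b => ∀ m ∈ Finset.Ico j b, m ∈ A) (k := n - 1)).1 rfl
    have hnot := h.2.2 (show blockEnd n A j < blockEnd n A j + 1 by omega) (by omega)
    push_neg at hnot
    obtain ⟨m, hm, hmA⟩ := hnot
    rw [Finset.mem_Ico] at hm
    have hbm : m = blockEnd n A j ∨ m < blockEnd n A j := by omega
    rcases hbm with rfl | hlt2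
    · exact hmA
    · exact absurd (be_mem A j hj m hm.1 hlt2) hmA

lemma sum_Icc_ent (x : Fin n → ℝ) {a b : ℕ} (hab : a ≤ b + 1) :
    ∑ m ∈ Finset.Icc a b, ent x m = pref x (b+1) - pref x a := by
  have h1 : Finset.Icc a b = Finset.Ico a (b+1) := by
    ext m; simp [Finset.mem_Icc, Finset.mem_Ico]
  have h2 : pref x (b+1) = pref x a + ∑ m ∈ Finset.Ico a (b+1), ent x m := by
    unfold pref
    rw [Finset.range_eq_Ico]
    rw [← Finset.sum_Ico_consecutive _ (Nat.zero_le a) hab]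
    rw [Finset.range_eq_Ico]
  rw [h1]; linarith

lemma SA_eq (ρ0 : Fin n → ℝ) (j : Fin n) (hn : 0 < n) :
    SA ρ0 A j = (pref ρ0 (blockEnd n A (j:ℕ) + 1) - pref ρ0 (blockStart A (j:ℕ))) /
      ((blockEnd n A (j:ℕ) - blockStart A (j:ℕ) + 1 : ℕ) : ℝ) := by
  have hj : (j:ℕ) ≤ n - 1 := by omega
  have hab : blockStart A (j:ℕ) ≤ blockEnd n A (j:ℕ) + 1 := by
    have h1 := bs_le A (j:ℕ); have h2 := le_be A (j:ℕ) hj; omega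
  unfold SA
  rw [← sum_Icc_ent ρ0 hab]
  rfl

end AvgPath


namespace AvgPath

variable {n : ℕ}

lemma claimB {ρ0 x : Fin n → ℝ} (hn : 0 < n) (hx : x ∈ Kset n ρ0)
    (hAf : ∀ i, 0 < i → i < n →
      pref x i = pref ρ0 i ∨ 2 * pref x i = pref x (i+1) + pref x (i-1)) :
    ∃ A ⊆ Finset.range (n-1), x = SA ρ0 A := by
  classical
  set A : Finset ℕ := (Finset.range (n-1)).filter
    (fun i => pref x (i+1) ≠ pref ρ0 (i+1)) with hA
  refine ⟨A, Finset.filter_subset _ _, ?_⟩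
  funext j
  set a := blockStart A (j:ℕ) with ha
  set b := blockEnd n A (j:ℕ) with hb
  have hjn : (j:ℕ) < n := j.isLt
  have hj : (j:ℕ) ≤ n - 1 := by omega
  have ha_le : a ≤ (j:ℕ) := bs_le A j
  have hb_ge : (j:ℕ) ≤ b := le_be A j hj
  have hb_le : b ≤ n - 1 := be_le A (j:ℕ)
  have htA : pref x a = pref ρ0 a := by
    rcases Nat.eq_zero_or_pos a with h0 | h0
    · rw [h0, pref_zero, pref_zero]
    · have hnotmem := bs_boundary A (j:ℕ) (by omega)
      have hrange : a - 1 < n - 1 := by omega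
      by_contra hne
      apply hnotmem
      rw [hA]
      refine Finset.mem_filter.2 ⟨Finset.mem_range.2 hrange, ?_⟩
      have he : a - 1 + 1 = a := by omega
      rw [he]
      exact hne
  have htB : pref x (b+1) = pref ρ0 (b+1) := by
    have hnotmem := be_not_mem A (j:ℕ) hj (Finset.filter_subset _ _)
    rcases eq_or_lt_of_le hb_le with he | hlt
    · rw [he, (show n - 1 + 1 = n by omega)]
      exact hx.2.2
    · by_contra hne
      exact hnotmem (Finset.mem_filter.2 ⟨Finset.mem_range.2 hlt, hne⟩)
  have hflat : ∀ m, a ≤ m → m < b → 2 * pref x (m+1) = pref x (m+2) + pref x m := by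
    intro m ham hmb
    have hmem : m ∈ A := by
      rcases lt_or_ge m (j:ℕ) with h | h
      · exact bs_mem A (j:ℕ) m ham h
      · exact be_mem A (j:ℕ) hj m h hmb
    have hmrange : m < n - 1 := Finset.mem_range.1 (Finset.mem_filter.1 hmem).1
    have hnt : pref x (m+1) ≠ pref ρ0 (m+1) := (Finset.mem_filter.1 hmem).2
    rcases hAf (m+1) (by omega) (by omega) with h | h
    · exact absurd h hnt
    · have he : m + 1 + 1 = m + 2 := rfl
      have he2 : m + 1 - 1 = m := by omega
      rw [he, he2] at h
      exact h
  have hinc : ∀ t, a + t ≤ b → ent x (a + t) = ent x a := by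
    intro t
    induction t with
    | zero => intro _; rfl
    | succ s ih =>
      intro hle
      have h1 := ih (by omega)
      have hf := hflat (a+s) (by omega) (by omega)
      have e1 := ent_eq_pref x (a+s)
      have e2 := ent_eq_pref x (a+s+1)
      have he : a + (s+1) = a + s + 1 := by ring
      have he2 : a + s + 2 = a + s + 1 + 1 := by ring
      rw [he2] at hf
      rw [he, e2]
      rw [e1] at h1
      linarith
  have hsum : pref x (b+1) - pref x a = ((b - a + 1 : ℕ) : ℝ) * ent x a := by
    rw [← sum_Icc_ent x (show a ≤ b + 1 by omega)]
    have hconst : ∀ m ∈ Finset.Icc a b, ent x m = ent x a := by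
      intro m hm
      rw [Finset.mem_Icc] at hm
      obtain ⟨t, rfl⟩ := Nat.exists_eq_add_of_le hm.1
      exact hinc t hm.2
    rw [Finset.sum_congr rfl hconst, Finset.sum_const, Nat.card_Icc, nsmul_eq_mul]
    congr 2
    omega
  have hcard : ((b - a + 1 : ℕ) : ℝ) ≠ 0 := by
    have h0 : (0:ℕ) < b - a + 1 := by omega
    exact Nat.cast_ne_zero.2 (by omega)
  have hxj : x j = ent x a := by
    have : ent x (j:ℕ) = ent x a := by
      obtain ⟨t, ht⟩ := Nat.exists_eq_add_of_le ha_le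
      rw [ht]; exact hinc t (by omega)
    rw [← this, ent_lt x hjn]
  rw [SA_eq A ρ0 j hn, ← htA, ← htB, hsum, hxj]
  rw [mul_comm, mul_div_assoc, div_self hcard, mul_one]

end AvgPath


namespace AvgPath

variable {n : ℕ}

lemma pref_add (x d : Fin n → ℝ) (j : ℕ) : pref (x + d) j = pref x j + pref d j := by
  unfold pref
  rw [← Finset.sum_add_distrib]
  refine Finset.sum_congr rfl fun k _ => ?_
  unfold ent
  by_cases h : k < n <;> simp [h]

lemma pref_smul (s : ℝ) (d : Fin n → ℝ) (j : ℕ) : pref (s • d) j = s * pref d j := by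
  unfold pref
  rw [Finset.mul_sum]
  refine Finset.sum_congr rfl fun k _ => ?_
  unfold ent
  by_cases h : k < n <;> simp [h]

lemma claimA {ρ0 x : Fin n → ℝ} (hn : 0 < n) (hρ0 : Monotone ρ0)
    (hx : x ∈ Set.extremePoints ℝ (Kset n ρ0)) :
    ∀ i, 0 < i → i < n →
      pref x i = pref ρ0 i ∨ 2 * pref x i = pref x (i+1) + pref x (i-1) := by
  classical
  obtain ⟨hxK, hext⟩ := hx
  have hpert : ∀ d : Fin n → ℝ, x + d ∈ Kset n ρ0 → x - d ∈ Kset n ρ0 → d = 0 := by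
    intro d h1 h2
    have hseg : x ∈ openSegment ℝ (x + d) (x - d) := by
      refine ⟨1/2, 1/2, by norm_num, by norm_num, by norm_num, ?_⟩
      funext k
      simp only [Pi.smul_apply, Pi.add_apply, Pi.sub_apply, smul_eq_mul]
      ring
    have h := hext h1 h2 hseg
    funext k
    have hk := congrFun h k
    simp only [Pi.add_apply] at hk
    have h2' : x k + d k = x k := hk
    simpa using h2'
  by_contra hcon
  push_neg at hcon
  obtain ⟨i0, hi00, hi0n, hnt, hnf⟩ := hcon
  obtain ⟨hconv, hlow, htot⟩ := hxK
  have hρ0K := rho0_mem_K hρ0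
  have hρconv := hρ0K.1
  have hlt : pref ρ0 i0 < pref x i0 := lt_of_le_of_ne (hlow i0) (Ne.symm hnt)
  have hstrict : 2 * pref x i0 < pref x (i0+1) + pref x (i0-1) :=
    lt_of_le_of_ne (hconv i0 hi00 hi0n) hnf
  have hT0 : pref x 0 = pref ρ0 0 := by rw [pref_zero, pref_zero]
  obtain ⟨a, haDef⟩ : ∃ a', Nat.findGreatest (fun i => pref x i = pref ρ0 i) i0 = a' := ⟨_, rfl⟩
  have haT : pref x a = pref ρ0 a := by
    rw [← haDef]
    exact Nat.findGreatest_spec (P := fun i => pref x i = pref ρ0 i) (Nat.zero_le i0) hT0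
  have ha_le : a ≤ i0 := by rw [← haDef]; exact Nat.findGreatest_le i0
  have ha_lt : a < i0 := by
    rcases eq_or_lt_of_le ha_le with heq | h
    · exact absurd (by rw [← heq]; exact haT) hnt
    · exact h
  have haNT : ∀ m, a < m → m ≤ i0 → ¬(pref x m = pref ρ0 m) := by
    intro m h1 h2
    exact Nat.findGreatest_is_greatest (P := fun i => pref x i = pref ρ0 i)
      (by rw [haDef]; exact h1) h2
  have hbex : ∃ m, i0 < m ∧ pref x m = pref ρ0 m := ⟨n, hi0n, htot⟩
  obtain ⟨b, hbDef⟩ : ∃ b', Nat.find hbex = b' := ⟨_, rfl⟩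
  have hbP := Nat.find_spec hbex
  rw [hbDef] at hbP
  have hb_gt : i0 < b := hbP.1
  have hbT : pref x b = pref ρ0 b := hbP.2
  have hb_le : b ≤ n := by rw [← hbDef]; exact Nat.find_min' hbex ⟨hi0n, htot⟩
  have hbNT : ∀ m, i0 < m → m < b → ¬(pref x m = pref ρ0 m) := by
    intro m h1 h2 hTm
    exact Nat.find_min hbex (by rw [hbDef]; exact h2) ⟨h1, hTm⟩
  have hden : ((b:ℝ) - (i0:ℝ)) ≠ 0 := by
    have : (i0:ℝ) < b := by exact_mod_cast hb_gt
    linarith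
  obtain ⟨D, hDeq⟩ : ∃ D' : ℕ → ℝ, (fun m => if m ≤ a then (0:ℝ)
      else if m ≤ i0 then (m:ℝ) - (a:ℝ)
      else if m ≤ b then ((b:ℝ) - (m:ℝ)) * ((i0:ℝ) - (a:ℝ)) / ((b:ℝ) - (i0:ℝ))
      else 0) = D' := ⟨_, rfl⟩
  have hDval : ∀ m, D m = if m ≤ a then (0:ℝ)
      else if m ≤ i0 then (m:ℝ) - (a:ℝ)
      else if m ≤ b then ((b:ℝ) - (m:ℝ)) * ((i0:ℝ) - (a:ℝ)) / ((b:ℝ) - (i0:ℝ))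
      else 0 := fun m => (congrFun hDeq m).symm
  have hDv0l : ∀ m, m ≤ a → D m = 0 := by
    intro m hm
    rw [hDval m, if_pos hm]
  have hDv1 : ∀ m, a ≤ m → m ≤ i0 → D m = (m:ℝ) - (a:ℝ) := by
    intro m h1 h2
    rw [hDval m]
    rcases eq_or_lt_of_le h1 with heq | hlt2
    · rw [if_pos (le_of_eq heq.symm)]
      have : (a:ℝ) = (m:ℝ) := by exact_mod_cast heq
      rw [← this]; ring
    · rw [if_neg (by omega), if_pos h2]
  have hDv2 : ∀ m, i0 ≤ m → m ≤ b →
      D m = ((b:ℝ) - (m:ℝ)) * ((i0:ℝ) - (a:ℝ)) / ((b:ℝ) - (i0:ℝ)) := by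
    intro m h1 h2
    rw [hDval m]
    rcases eq_or_lt_of_le h1 with heq | hlt2
    · rw [if_neg (by omega), if_pos (by omega)]
      have hc : (i0:ℝ) = (m:ℝ) := by exact_mod_cast heq
      rw [← hc]
      field_simp
    · rw [if_neg (by omega), if_neg (by omega), if_pos h2]
  have hDv0r : ∀ m, b ≤ m → D m = 0 := by
    intro m hm
    rcases eq_or_lt_of_le hm with heq | hlt2
    · rw [hDval m, if_neg (by omega), if_neg (by omega), if_pos (by omega)]
      have hc : (b:ℝ) = (m:ℝ) := by exact_mod_cast heq
      rw [← hc]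
      simp
    · rw [hDval m, if_neg (by omega), if_neg (by omega), if_neg (by omega)]
  have hD0 : D 0 = 0 := hDv0l 0 (Nat.zero_le a)
  have hDn : D n = 0 := hDv0r n hb_le
  have hcast1 : ∀ i : ℕ, 0 < i → ((i - 1 : ℕ) : ℝ) = (i:ℝ) - 1 := by
    intro i h0
    have h1 : 1 ≤ i := h0
    push_cast [Nat.cast_sub h1]
    ring
  have hlin : ∀ i, 0 < i → i ≠ a → i ≠ i0 → i ≠ b →
      2 * D i - D (i+1) - D (i-1) = 0 := by
    intro i h0 hia hii0 hib
    rcases (show i + 1 ≤ a ∨ (a ≤ i - 1 ∧ i + 1 ≤ i0) ∨ (i0 ≤ i - 1 ∧ i + 1 ≤ b)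
        ∨ b ≤ i - 1 by omega) with h | ⟨h1, h2⟩ | ⟨h1, h2⟩ | h
    · rw [hDv0l i (by omega), hDv0l (i+1) h, hDv0l (i-1) (by omega)]; ring
    · rw [hDv1 i (by omega) (by omega), hDv1 (i+1) (by omega) h2,
        hDv1 (i-1) h1 (by omega), hcast1 i h0]
      push_cast
      ring
    · rw [hDv2 i (by omega) (by omega), hDv2 (i+1) (by omega) h2,
        hDv2 (i-1) h1 (by omega), hcast1 i h0]
      push_cast
      field_simp
      ring
    · rw [hDv0r i (by omega), hDv0r (i+1) (by omega), hDv0r (i-1) h]; ring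
  have hslacka : 0 < a → 2 * pref x a < pref x (a+1) + pref x (a-1) := by
    intro h0
    rcases lt_or_eq_of_le (hconv a h0 (by omega)) with h | h
    · exact h
    · exfalso
      have hρ := hρconv a h0 (by omega)
      have h1 := hlow (a-1)
      have h2 := hlow (a+1)
      exact haNT (a+1) (by omega) (by omega) (by linarith)
  have hslackb : b < n → 2 * pref x b < pref x (b+1) + pref x (b-1) := by
    intro hbn
    rcases lt_or_eq_of_le (hconv b (by omega) hbn) with h | h
    · exact h
    · exfalso
      have hρ := hρconv b (by omega) hbn
      have h1 := hlow (b-1)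
      have h2 := hlow (b+1)
      have hTb1 : pref x (b-1) = pref ρ0 (b-1) := by linarith
      rcases eq_or_lt_of_le (show i0 ≤ b - 1 by omega) with he | hlt2
      · apply hnt
        rw [← he] at hTb1
        exact hTb1
      · exact hbNT (b-1) hlt2 (by omega) hTb1
  -- choose epsilon
  obtain ⟨S, hSeq⟩ : ∃ S' : Finset ℕ,
      (Finset.Ioo 0 n).filter (fun i => i = a ∨ i = i0 ∨ i = b) = S' := ⟨_, rfl⟩
  obtain ⟨F2, hF2eq⟩ : ∃ F' : Finset ℕ,
      (Finset.range (n+1)).filter (fun i => D i ≠ 0) = F' := ⟨_, rfl⟩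
  have hSmem : ∀ i, i ∈ S ↔ (0 < i ∧ i < n) ∧ (i = a ∨ i = i0 ∨ i = b) := by
    intro i
    rw [← hSeq, Finset.mem_filter, Finset.mem_Ioo]
  have hF2mem : ∀ i, i ∈ F2 ↔ i < n + 1 ∧ D i ≠ 0 := by
    intro i
    rw [← hF2eq, Finset.mem_filter, Finset.mem_range]
  have hslackS : ∀ i ∈ S, 0 < pref x (i+1) + pref x (i-1) - 2 * pref x i := by
    intro i hi
    rw [hSmem] at hi
    obtain ⟨⟨hi0', hin'⟩, hcase⟩ := hi
    rcases hcase with rfl | rfl | rfl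
    · linarith [hslacka hi0']
    · linarith [hstrict]
    · linarith [hslackb hin']
  have hDrange : ∀ i, D i ≠ 0 → a < i ∧ i < b := by
    intro i hi
    constructor
    · by_contra h
      exact hi (hDv0l i (by omega))
    · by_contra h
      exact hi (hDv0r i (by omega))
  have hslackF2 : ∀ i ∈ F2, 0 < pref x i - pref ρ0 i := by
    intro i hi
    rw [hF2mem] at hi
    obtain ⟨hir, hiD⟩ := hi
    obtain ⟨h1, h2⟩ := hDrange i hiD
    have hnotT : ¬(pref x i = pref ρ0 i) := by
      rcases le_or_gt i i0 with h | h
      · exact haNT i h1 h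
      · exact hbNT i h h2
    rcases eq_or_lt_of_le (hlow i) with he | hx2
    · exact absurd he.symm hnotT
    · linarith
  obtain ⟨cands, hcandseq⟩ : ∃ C : Finset ℝ, insert (1:ℝ)
      ((S.image fun i => (pref x (i+1) + pref x (i-1) - 2 * pref x i)
          / (|2 * D i - D (i+1) - D (i-1)| + 1)) ∪
       (F2.image fun i => (pref x i - pref ρ0 i) / (|D i| + 1))) = C := ⟨_, rfl⟩
  have hcne : cands.Nonempty := ⟨1, by rw [← hcandseq]; exact Finset.mem_insert_self _ _⟩
  obtain ⟨ε, hεdef⟩ : ∃ e, cands.min' hcne = e := ⟨_, rfl⟩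
  have hεpos : 0 < ε := by
    have hmem : ε ∈ cands := hεdef ▸ cands.min'_mem hcne
    rw [← hcandseq] at hmem
    rcases Finset.mem_insert.1 hmem with he | hm
    · rw [he]; norm_num
    · rcases Finset.mem_union.1 hm with hm1 | hm1
      · obtain ⟨i, hi, heq⟩ := Finset.mem_image.1 hm1
        rw [← heq]
        exact div_pos (hslackS i hi) (by positivity)
      · obtain ⟨i, hi, heq⟩ := Finset.mem_image.1 hm1
        rw [← heq]
        exact div_pos (hslackF2 i hi) (by positivity)
  have hε1 : ∀ i ∈ S, ε * (|2 * D i - D (i+1) - D (i-1)| + 1)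
      ≤ pref x (i+1) + pref x (i-1) - 2 * pref x i := by
    intro i hi
    have hmemc : (pref x (i+1) + pref x (i-1) - 2 * pref x i)
        / (|2 * D i - D (i+1) - D (i-1)| + 1) ∈ cands := by
      rw [← hcandseq]
      exact Finset.mem_insert_of_mem (Finset.mem_union_left _ (Finset.mem_image_of_mem _ hi))
    have hle : ε ≤ (pref x (i+1) + pref x (i-1) - 2 * pref x i)
        / (|2 * D i - D (i+1) - D (i-1)| + 1) := hεdef ▸ Finset.min'_le _ _ hmemc
    have hpos : (0:ℝ) < |2 * D i - D (i+1) - D (i-1)| + 1 := by positivity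
    calc ε * (|2 * D i - D (i+1) - D (i-1)| + 1)
        ≤ ((pref x (i+1) + pref x (i-1) - 2 * pref x i)
            / (|2 * D i - D (i+1) - D (i-1)| + 1)) * (|2 * D i - D (i+1) - D (i-1)| + 1) :=
          mul_le_mul_of_nonneg_right hle (le_of_lt hpos)
      _ = pref x (i+1) + pref x (i-1) - 2 * pref x i := div_mul_cancel₀ _ (ne_of_gt hpos)
  have hε2 : ∀ i ∈ F2, ε * (|D i| + 1) ≤ pref x i - pref ρ0 i := by
    intro i hi
    have hmemc : (pref x i - pref ρ0 i) / (|D i| + 1) ∈ cands := by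
      rw [← hcandseq]
      exact Finset.mem_insert_of_mem (Finset.mem_union_right _ (Finset.mem_image_of_mem _ hi))
    have hle : ε ≤ (pref x i - pref ρ0 i) / (|D i| + 1) := hεdef ▸ Finset.min'_le _ _ hmemc
    have hpos : (0:ℝ) < |D i| + 1 := by positivity
    calc ε * (|D i| + 1) ≤ ((pref x i - pref ρ0 i) / (|D i| + 1)) * (|D i| + 1) :=
          mul_le_mul_of_nonneg_right hle (le_of_lt hpos)
      _ = pref x i - pref ρ0 i := div_mul_cancel₀ _ (ne_of_gt hpos)
  obtain ⟨d, hdeq⟩ : ∃ d' : Fin n → ℝ,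
      (fun k : Fin n => ε * (D ((k:ℕ)+1) - D (k:ℕ))) = d' := ⟨_, rfl⟩
  have hdval : ∀ k : Fin n, d k = ε * (D ((k:ℕ)+1) - D (k:ℕ)) :=
    fun k => (congrFun hdeq k).symm
  have hprefd : ∀ j, j ≤ n → pref d j = ε * D j := by
    intro j
    induction j with
    | zero => intro _; rw [pref_zero, hD0]; ring
    | succ m ih =>
      intro hm
      rw [pref_succ, ih (by omega), ent_lt d (by omega), hdval]
      simp only
      ring
  have hmem : ∀ s : ℝ, s = 1 ∨ s = -1 → x + s • d ∈ Kset n ρ0 := by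
    intro s hs
    have hP : ∀ j, j ≤ n → pref (x + s • d) j = pref x j + s * (ε * D j) := by
      intro j hj
      rw [pref_add, pref_smul, hprefd j hj]
    have hsc : ∀ r : ℝ, s * r ≤ |r| := by
      intro r
      rcases hs with rfl | rfl
      · simpa using le_abs_self r
      · simpa using neg_le_abs r
    refine ⟨?_, ?_, ?_⟩
    · intro i h0 hin
      rw [hP i (by omega), hP (i+1) (by omega), hP (i-1) (by omega)]
      by_cases hk : i = a ∨ i = i0 ∨ i = b
      · have hiS : i ∈ S := (hSmem i).2 ⟨⟨h0, hin⟩, hk⟩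
        have h1 := hε1 i hiS
        have h2 : s * (2 * D i - D (i+1) - D (i-1)) ≤ |2 * D i - D (i+1) - D (i-1)| :=
          hsc _
        have h3 : ε * (s * (2 * D i - D (i+1) - D (i-1)))
            ≤ ε * |2 * D i - D (i+1) - D (i-1)| :=
          mul_le_mul_of_nonneg_left h2 (le_of_lt hεpos)
        have h4 : ε * |2 * D i - D (i+1) - D (i-1)|
            ≤ ε * (|2 * D i - D (i+1) - D (i-1)| + 1) :=
          mul_le_mul_of_nonneg_left (by linarith [abs_nonneg (2 * D i - D (i+1) - D (i-1))])
            hεpos.le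
        have key : ε * (s * (2 * D i - D (i+1) - D (i-1)))
            ≤ pref x (i+1) + pref x (i-1) - 2 * pref x i := by linarith
        linarith [key]
      · push_neg at hk
        have hcz := hlin i h0 hk.1 hk.2.1 hk.2.2
        have hrel : 2 * D i = D (i+1) + D (i-1) := by linarith
        have hrel2 : s * (ε * (2 * D i)) = s * (ε * (D (i+1) + D (i-1))) := by rw [hrel]
        have := hconv i h0 hin
        linarith [hrel2]
    · intro i
      rcases le_or_gt i n with hi | hi
      · rw [hP i hi]
        by_cases hDz : D i = 0
        · rw [hDz]
          have := hlow i
          linarith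
        · have hiF : i ∈ F2 := (hF2mem i).2 ⟨by omega, hDz⟩
          have h1 := hε2 i hiF
          have h2 : s * (-(D i)) ≤ |D i| := by
            have := hsc (-(D i))
            simpa using this
          have h3 : ε * (s * (-(D i))) ≤ ε * |D i| :=
            mul_le_mul_of_nonneg_left h2 (le_of_lt hεpos)
          have h4 : ε * |D i| ≤ ε * (|D i| + 1) :=
            mul_le_mul_of_nonneg_left (by linarith [abs_nonneg (D i)]) hεpos.le
          linarith
      · rw [pref_stab (x + s • d) (le_of_lt hi), pref_stab ρ0 (le_of_lt hi),
          hP n (le_refl n), hDn]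
        linarith [htot]
    · rw [hP n (le_refl n), hDn, htot]
      ring
  have hxd1 : x + d ∈ Kset n ρ0 := by
    have h := hmem 1 (Or.inl rfl)
    rwa [one_smul] at h
  have hxd2 : x - d ∈ Kset n ρ0 := by
    have h := hmem (-1) (Or.inr rfl)
    have he : x + (-1 : ℝ) • d = x - d := by
      funext k
      simp [Pi.add_apply, Pi.sub_apply]
      ring
    rwa [he] at h
  have hd0 := hpert d hxd1 hxd2
  have hda : d ⟨a, by omega⟩ = 0 := by rw [hd0]; rfl
  rw [hdval ⟨a, by omega⟩] at hda
  simp only at hda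
  rw [hDv1 (a+1) (by omega) (by omega), hDv0l a (le_refl a)] at hda
  push_cast at hda
  have hε0 : ε = 0 := by
    have h1 : ε * ((a:ℝ) + 1 - a - 0) = ε := by ring
    rw [← h1, hda]  
  linarith

end AvgPath


namespace AvgPath

variable {n : ℕ}

lemma avg_apply_ne {p : ℕ} (hp : p + 1 < n) (σ : Fin n → ℝ) (i : Fin n)
    (h1 : (i:ℕ) ≠ p) (h2 : (i:ℕ) ≠ p + 1) :
    avg ⟨p, Nat.lt_of_succ_lt hp⟩ ⟨p+1, hp⟩ σ i = σ i := by
  unfold avg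
  rw [if_neg]
  push_neg
  constructor <;> intro hc
  · exact h1 (by simpa [Fin.ext_iff] using hc)
  · exact h2 (by simpa [Fin.ext_iff] using hc)

lemma avg_apply_eq {p : ℕ} (hp : p + 1 < n) (σ : Fin n → ℝ) (i : Fin n)
    (h : (i:ℕ) = p ∨ (i:ℕ) = p + 1) :
    avg ⟨p, Nat.lt_of_succ_lt hp⟩ ⟨p+1, hp⟩ σ i
      = (σ ⟨p, Nat.lt_of_succ_lt hp⟩ + σ ⟨p+1, hp⟩) / 2 := by
  unfold avg
  rw [if_pos]
  rcases h with h | h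
  · exact Or.inl (by simpa [Fin.ext_iff] using h)
  · exact Or.inr (by simpa [Fin.ext_iff] using h)

lemma stepAt_apply_ne (p : ℕ) (σ : Fin n → ℝ) (i : Fin n)
    (h1 : (i:ℕ) ≠ p) (h2 : (i:ℕ) ≠ p + 1) : stepAt n p σ i = σ i := by
  unfold stepAt
  split
  · exact avg_apply_ne _ σ i h1 h2
  · rfl

lemma stepAt_attain {ρ0 : Fin n → ℝ} {σ : Fin n → ℝ} (p : ℕ)
    (hσ : σ ∈ attainable n (pathEdges n) ρ0) :
    stepAt n p σ ∈ attainable n (pathEdges n) ρ0 := by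
  unfold stepAt
  split
  · next h =>
    obtain ⟨L, hL, rfl⟩ := hσ
    refine ⟨L ++ [(⟨p, Nat.lt_of_succ_lt h⟩, ⟨p+1, h⟩)], ?_, ?_⟩
    · intro q hq
      rcases List.mem_append.1 hq with hq | hq
      · exact hL q hq
      · rcases List.mem_singleton.1 hq with rfl
        constructor
        · intro hc
          have : p = p + 1 := by simpa [Fin.ext_iff] using hc
          omega
        · exact ⟨p, h, rfl⟩
    · rw [List.foldl_append]
      rfl
  · exact hσ

/-- conditional step used in the sweep -/
noncomputable def cstep (n : ℕ) (A : Finset ℕ) (σ : Fin n → ℝ) (p : ℕ) : Fin n → ℝ :=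
  if p ∈ A then stepAt n p σ else σ

lemma cstep_attain {ρ0 σ : Fin n → ℝ} (A : Finset ℕ) (p : ℕ)
    (hσ : σ ∈ attainable n (pathEdges n) ρ0) :
    cstep n A σ p ∈ attainable n (pathEdges n) ρ0 := by
  unfold cstep
  split
  · exact stepAt_attain p hσ
  · exact hσ

lemma foldl_cstep_attain {ρ0 : Fin n → ℝ} (A : Finset ℕ) (l : List ℕ) :
    ∀ σ, σ ∈ attainable n (pathEdges n) ρ0 →
      l.foldl (cstep n A) σ ∈ attainable n (pathEdges n) ρ0 := by
  induction l with
  | nil => intro σ hσ; exact hσ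
  | cons p l ih =>
    intro σ hσ
    exact ih _ (cstep_attain A p hσ)

lemma foldl_cstep_untouched (A : Finset ℕ) {a b : ℕ} (l : List ℕ)
    (hl : ∀ p ∈ l, p ∈ A → p + 1 < a ∨ b < p) :
    ∀ σ, ∀ i : Fin n, a ≤ (i:ℕ) → (i:ℕ) ≤ b →
      l.foldl (cstep n A) σ i = σ i := by
  induction l with
  | nil => intro σ i _ _; rfl
  | cons p l ih =>
    intro σ i hai hib
    simp only [List.foldl_cons]
    rw [ih (fun q hq => hl q (List.mem_cons_of_mem _ hq)) _ i hai hib]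
    unfold cstep
    split
    · next hpA =>
      rcases hl p (List.mem_cons_self) hpA with h | h
      · exact stepAt_apply_ne p σ i (by omega) (by omega)
      · exact stepAt_apply_ne p σ i (by omega) (by omega)
    · rfl

end AvgPath


namespace AvgPath

variable {n : ℕ}

lemma mid_sweep {a b : ℕ} (hb0 : a ≤ b) (hbn : b < n) (σ : Fin n → ℝ) (mn mx : ℝ)
    (hbd : ∀ i : Fin n, a ≤ (i:ℕ) → (i:ℕ) ≤ b → mn ≤ σ i ∧ σ i ≤ mx) :
    ∀ t, a + t ≤ b →
      (∀ i : Fin n, a ≤ (i:ℕ) → (i:ℕ) ≤ b → a + t < (i:ℕ) →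
        (List.range' a t).foldl (fun τ p => stepAt n p τ) σ i = σ i) ∧
      (∀ i : Fin n, a ≤ (i:ℕ) → (i:ℕ) ≤ a + t →
        (1/2:ℝ)^(min ((i:ℕ)+1-a) t) * σ ⟨a, by omega⟩
            + (1 - (1/2:ℝ)^(min ((i:ℕ)+1-a) t)) * mn
          ≤ (List.range' a t).foldl (fun τ p => stepAt n p τ) σ i ∧
        (List.range' a t).foldl (fun τ p => stepAt n p τ) σ i
          ≤ (1/2:ℝ)^(min ((i:ℕ)+1-a) t) * σ ⟨a, by omega⟩
            + (1 - (1/2:ℝ)^(min ((i:ℕ)+1-a) t)) * mx) := by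
  intro t
  induction t with
  | zero =>
    intro _
    constructor
    · intro i _ _ _; rfl
    · intro i hai hia
      have hie : i = (⟨a, by omega⟩ : Fin n) := by
        apply Fin.ext
        simp only [Fin.val_mk]
        omega
      have hmin : min ((i:ℕ)+1-a) 0 = 0 := Nat.min_zero _
      rw [hmin, pow_zero]
      simp only [List.range'_zero, List.foldl_nil]
      rw [hie]
      constructor <;> linarith [(hbd ⟨a, by omega⟩ (by simp) (by simpa using hb0)).1,
        (hbd ⟨a, by omega⟩ (by simp) (by simpa using hb0)).2]
  | succ t ih =>
    intro hle
    have iht := ih (by omega)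
    have hcat : List.range' a (t+1) = List.range' a t ++ [a + t] := by
      have := List.range'_concat (step := 1) (s := a) (n := t)
      simpa using this
    rw [hcat]
    simp only [List.foldl_append, List.foldl_cons, List.foldl_nil]
    set z := (List.range' a t).foldl (fun τ p => stepAt n p τ) σ with hz
    have hp : a + t + 1 < n := by omega
    have hstep : stepAt n (a+t) z = avg ⟨a+t, Nat.lt_of_succ_lt hp⟩ ⟨a+t+1, hp⟩ z :=
      dif_pos hp
    rw [hstep]
    have hzp : mn ≤ z ⟨a+t, Nat.lt_of_succ_lt hp⟩ ∧
        (1/2:ℝ)^t * σ ⟨a, by omega⟩ + (1 - (1/2:ℝ)^t) * mn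
          ≤ z ⟨a+t, Nat.lt_of_succ_lt hp⟩ ∧
        z ⟨a+t, Nat.lt_of_succ_lt hp⟩
          ≤ (1/2:ℝ)^t * σ ⟨a, by omega⟩ + (1 - (1/2:ℝ)^t) * mx := by
      have h2 := iht.2 ⟨a+t, Nat.lt_of_succ_lt hp⟩ (by simp) (by simp)
      have hmin : min ((a+t:ℕ)+1-a) t = t := by omega
      rw [hmin] at h2
      refine ⟨?_, h2.1, h2.2⟩
      have hu := hbd ⟨a, by omega⟩ (by simp) (by simpa using hb0)
      have hpow1 : (1/2:ℝ)^t ≤ 1 := pow_le_one₀ (by norm_num) (by norm_num)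
      have hpow0 : (0:ℝ) ≤ (1/2:ℝ)^t := by positivity
      nlinarith [h2.1, hu.1]
    have hzp1 : z ⟨a+t+1, hp⟩ = σ ⟨a+t+1, hp⟩ :=
      iht.1 ⟨a+t+1, hp⟩ (by simp; omega) (by simp; omega) (by simp)
    have hσp1 := hbd ⟨a+t+1, hp⟩ (by simp; omega) (by simp; omega)
    constructor
    · intro i hai hib hgt
      rw [avg_apply_ne hp z i (by omega) (by omega)]
      exact iht.1 i hai hib (by omega)
    · intro i hai hile
      have hps : (1/2:ℝ)^(t+1) = (1/2:ℝ)^t * (1/2) := pow_succ _ _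
      rcases lt_or_ge (i:ℕ) (a+t) with hlt | hge
      · rw [avg_apply_ne hp z i (by omega) (by omega)]
        have h2 := iht.2 i hai (by omega)
        have hmin : min ((i:ℕ)+1-a) (t+1) = min ((i:ℕ)+1-a) t := by omega
        rw [hmin]
        exact h2
      · have heq : (i:ℕ) = a + t ∨ (i:ℕ) = a + t + 1 := by omega
        rw [avg_apply_eq hp z i heq]
        have hmin : min ((i:ℕ)+1-a) (t+1) = t + 1 := by omega
        rw [hmin, hzp1]
        obtain ⟨hz0, hz1, hz2⟩ := hzp
        rw [hps]
        constructor
        · nlinarith [hσp1.1]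
        · nlinarith [hσp1.2]

lemma mid_pref {a b : ℕ} (hbn : b < n) (σ : Fin n → ℝ) :
    ∀ t, a + t ≤ b →
      pref ((List.range' a t).foldl (fun τ p => stepAt n p τ) σ) (b+1) = pref σ (b+1) ∧
      pref ((List.range' a t).foldl (fun τ p => stepAt n p τ) σ) a = pref σ a := by
  intro t
  induction t with
  | zero => intro _; exact ⟨rfl, rfl⟩
  | succ t ih =>
    intro hle
    have iht := ih (by omega)
    have hcat : List.range' a (t+1) = List.range' a t ++ [a + t] := by
      have := List.range'_concat (step := 1) (s := a) (n := t)
      simpa using this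
    rw [hcat]
    simp only [List.foldl_append, List.foldl_cons, List.foldl_nil]
    set z := (List.range' a t).foldl (fun τ p => stepAt n p τ) σ with hz
    have hp : a + t + 1 < n := by omega
    have hstep : stepAt n (a+t) z = avg ⟨a+t, Nat.lt_of_succ_lt hp⟩ ⟨a+t+1, hp⟩ z :=
      dif_pos hp
    rw [hstep]
    constructor
    · rw [pref_avg_ge z hp (by omega)]
      exact iht.1
    · rw [pref_avg_le z hp (by omega)]
      exact iht.2

end AvgPath


namespace AvgPath

variable {n : ℕ}

noncomputable def sweep (n : ℕ) (A : Finset ℕ) (σ : Fin n → ℝ) : Fin n → ℝ :=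
  (List.range (n-1)).foldl (cstep n A) σ

lemma foldl_cstep_eq (A : Finset ℕ) (l : List ℕ) (h : ∀ p ∈ l, p ∈ A) :
    ∀ σ : Fin n → ℝ, l.foldl (cstep n A) σ = l.foldl (fun τ p => stepAt n p τ) σ := by
  induction l with
  | nil => intro σ; rfl
  | cons p l ih =>
    intro σ
    simp only [List.foldl_cons]
    rw [show cstep n A σ p = stepAt n p σ from if_pos (h p (List.mem_cons_self))]
    exact ih (fun q hq => h q (List.mem_cons_of_mem _ hq)) _

lemma sweep_decomp (A : Finset ℕ) (hn : 0 < n) {a b : ℕ} (hab : a ≤ b) (hb : b ≤ n-1)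
    (σ : Fin n → ℝ) :
    sweep n A σ = (List.range' b (n-1-b)).foldl (cstep n A)
      ((List.range' a (b-a)).foldl (cstep n A)
        ((List.range' 0 a).foldl (cstep n A) σ)) := by
  unfold sweep
  rw [List.range_eq_range']
  have e1 := List.range'_append (s := 0) (m := a) (n := b-a) (step := 1)
  simp only [one_mul, Nat.zero_add] at e1
  rw [show a + (b - a) = b from by omega] at e1
  have e2 := List.range'_append (s := 0) (m := b) (n := n-1-b) (step := 1)
  simp only [one_mul, Nat.zero_add] at e2
  rw [show b + (n - 1 - b) = n - 1 from by omega] at e2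
  rw [← e2, ← e1, List.foldl_append, List.foldl_append]

section Block

lemma block_facts (A : Finset ℕ) (hA : A ⊆ Finset.range (n-1)) (hn : 0 < n) (j : Fin n) :
    blockStart A (j:ℕ) ≤ (j:ℕ) ∧ (j:ℕ) ≤ blockEnd n A (j:ℕ) ∧
    blockEnd n A (j:ℕ) ≤ n - 1 ∧
    (∀ m, blockStart A (j:ℕ) ≤ m → m < blockEnd n A (j:ℕ) → m ∈ A) ∧
    (∀ p, p < blockStart A (j:ℕ) → p ∈ A → p + 1 < blockStart A (j:ℕ)) ∧
    (∀ p, blockEnd n A (j:ℕ) ≤ p → p ∈ A → blockEnd n A (j:ℕ) < p) := by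
  have hj : (j:ℕ) ≤ n - 1 := by have := j.isLt; omega
  refine ⟨bs_le A (j:ℕ), le_be A (j:ℕ) hj, be_le A (j:ℕ), ?_, ?_, ?_⟩
  · intro m h1 h2
    rcases lt_or_ge m (j:ℕ) with h | h
    · exact bs_mem A (j:ℕ) m h1 h
    · exact be_mem A (j:ℕ) hj m h h2
  · intro p hp hpA
    have h0 : blockStart A (j:ℕ) ≠ 0 := by omega
    have := bs_boundary A (j:ℕ) h0
    by_contra hc
    have : p = blockStart A (j:ℕ) - 1 := by omega
    exact absurd hpA (this ▸ bs_boundary A (j:ℕ) h0)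
  · intro p hp hpA
    rcases eq_or_lt_of_le hp with rfl | h
    · exact absurd hpA (be_not_mem A (j:ℕ) hj hA)
    · exact h

lemma block_bounds (A : Finset ℕ) (hA : A ⊆ Finset.range (n-1)) (hn : 0 < n) (j : Fin n) (σ : Fin n → ℝ) (mn mx : ℝ)
    (hbd : ∀ i : Fin n, blockStart A (j:ℕ) ≤ (i:ℕ) → (i:ℕ) ≤ blockEnd n A (j:ℕ) →
      mn ≤ σ i ∧ σ i ≤ mx) :
    ∀ i : Fin n, blockStart A (j:ℕ) ≤ (i:ℕ) → (i:ℕ) ≤ blockEnd n A (j:ℕ) →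
      (1/2:ℝ)^(blockEnd n A (j:ℕ) - blockStart A (j:ℕ)) * σ ⟨blockStart A (j:ℕ), by
          have := (block_facts A hA hn j).1; have := j.isLt; omega⟩
        + (1 - (1/2:ℝ)^(blockEnd n A (j:ℕ) - blockStart A (j:ℕ))) * mn ≤ sweep n A σ i ∧
      sweep n A σ i ≤
        (1/2:ℝ)^(blockEnd n A (j:ℕ) - blockStart A (j:ℕ)) * σ ⟨blockStart A (j:ℕ), by
          have := (block_facts A hA hn j).1; have := j.isLt; omega⟩
        + (1 - (1/2:ℝ)^(blockEnd n A (j:ℕ) - blockStart A (j:ℕ))) * mx := by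
  obtain ⟨h1, h2, h3, hblk, haout, hbout⟩ := block_facts A hA hn j
  set a := blockStart A (j:ℕ) with had
  set b := blockEnd n A (j:ℕ) with hbd2
  have hab : a ≤ b := le_trans h1 h2
  have hbn : b < n := by omega
  have han : a < n := by omega
  intro i hai hib
  rw [sweep_decomp A hn hab h3]
  set σ1 := (List.range' 0 a).foldl (cstep n A) σ with hσ1
  have hout1 : ∀ p ∈ List.range' 0 a, p ∈ A → p + 1 < a ∨ b < p := by
    intro p hp hpA
    rw [List.mem_range'] at hp
    obtain ⟨ii, hii, rfl⟩ := hp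
    exact Or.inl (haout _ (by omega) hpA)
  have hσ1eq : ∀ i' : Fin n, a ≤ (i':ℕ) → (i':ℕ) ≤ b → σ1 i' = σ i' :=
    fun i' h1' h2' => foldl_cstep_untouched A _ hout1 σ i' h1' h2'
  have hbd1 : ∀ i' : Fin n, a ≤ (i':ℕ) → (i':ℕ) ≤ b → mn ≤ σ1 i' ∧ σ1 i' ≤ mx := by
    intro i' h1' h2'
    rw [hσ1eq i' h1' h2']
    exact hbd i' h1' h2'
  rw [foldl_cstep_eq A _ (by
    intro p hp
    rw [List.mem_range'] at hp
    obtain ⟨ii, hii, rfl⟩ := hp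
    exact hblk _ (by omega) (by omega)) σ1]
  set z := (List.range' a (b-a)).foldl (fun τ p => stepAt n p τ) σ1 with hzd
  have hout3 : ∀ p ∈ List.range' b (n-1-b), p ∈ A → p + 1 < a ∨ b < p := by
    intro p hp hpA
    rw [List.mem_range'] at hp
    obtain ⟨ii, hii, rfl⟩ := hp
    exact Or.inr (hbout _ (by omega) hpA)
  rw [foldl_cstep_untouched A _ hout3 z i hai hib]
  have hmid := (mid_sweep hab hbn σ1 mn mx hbd1 (b-a) (by omega)).2 i hai (by omega)
  have hua : σ1 ⟨a, han⟩ = σ ⟨a, han⟩ := hσ1eq ⟨a, han⟩ (by simp) (by simp; omega)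
  rw [hua] at hmid
  set e := min ((i:ℕ)+1-a) (b-a) with hed
  set w := (1/2:ℝ)^e with hwd
  set δ := (1/2:ℝ)^(b-a) with hδd
  have hwδ : δ ≤ w := by
    rw [hwd, hδd]
    exact pow_le_pow_of_le_one (by norm_num) (by norm_num) (min_le_right _ _)
  have hw1 : w ≤ 1 := pow_le_one₀ (by norm_num) (by norm_num)
  have hu := hbd ⟨a, han⟩ (by simp) (by simp; omega)
  constructor
  · nlinarith [hmid.1, hu.1, hu.2]
  · nlinarith [hmid.2, hu.1, hu.2]

lemma block_sum (A : Finset ℕ) (hA : A ⊆ Finset.range (n-1)) (hn : 0 < n) (j : Fin n) (σ : Fin n → ℝ) :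
    ∑ m ∈ Finset.Icc (blockStart A (j:ℕ)) (blockEnd n A (j:ℕ)), ent (sweep n A σ) m
      = ∑ m ∈ Finset.Icc (blockStart A (j:ℕ)) (blockEnd n A (j:ℕ)), ent σ m := by
  obtain ⟨h1, h2, h3, hblk, haout, hbout⟩ := block_facts A hA hn j
  set a := blockStart A (j:ℕ) with had
  set b := blockEnd n A (j:ℕ) with hbd2
  have hab : a ≤ b := le_trans h1 h2
  have hbn : b < n := by omega
  have hentc : ∀ τ τ' : Fin n → ℝ,
      (∀ i : Fin n, a ≤ (i:ℕ) → (i:ℕ) ≤ b → τ i = τ' i) →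
      ∑ m ∈ Finset.Icc a b, ent τ m = ∑ m ∈ Finset.Icc a b, ent τ' m := by
    intro τ τ' h
    refine Finset.sum_congr rfl fun m hm => ?_
    rw [Finset.mem_Icc] at hm
    have hmn : m < n := by omega
    rw [ent_lt τ hmn, ent_lt τ' hmn]
    exact h ⟨m, hmn⟩ hm.1 hm.2
  rw [sweep_decomp A hn hab h3]
  set σ1 := (List.range' 0 a).foldl (cstep n A) σ with hσ1
  have hout1 : ∀ p ∈ List.range' 0 a, p ∈ A → p + 1 < a ∨ b < p := by
    intro p hp hpA
    rw [List.mem_range'] at hp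
    obtain ⟨ii, hii, rfl⟩ := hp
    exact Or.inl (haout _ (by omega) hpA)
  rw [foldl_cstep_eq A _ (by
    intro p hp
    rw [List.mem_range'] at hp
    obtain ⟨ii, hii, rfl⟩ := hp
    exact hblk _ (by omega) (by omega)) σ1]
  set z := (List.range' a (b-a)).foldl (fun τ p => stepAt n p τ) σ1 with hzd
  have hout3 : ∀ p ∈ List.range' b (n-1-b), p ∈ A → p + 1 < a ∨ b < p := by
    intro p hp hpA
    rw [List.mem_range'] at hp
    obtain ⟨ii, hii, rfl⟩ := hp
    exact Or.inr (hbout _ (by omega) hpA)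
  rw [hentc _ z (fun i' h1' h2' => foldl_cstep_untouched A _ hout3 z i' h1' h2')]
  have hzsum : ∑ m ∈ Finset.Icc a b, ent z m = ∑ m ∈ Finset.Icc a b, ent σ1 m := by
    rw [sum_Icc_ent z (by omega), sum_Icc_ent σ1 (by omega)]
    have hmp := mid_pref (n := n) (a := a) (b := b) hbn σ1 (b-a) (by omega)
    rw [← hzd] at hmp
    rw [hmp.1, hmp.2]
  rw [hzsum]
  exact hentc σ1 σ (fun i' h1' h2' => foldl_cstep_untouched A _ hout1 σ i' h1' h2')

end Block

end AvgPath


namespace AvgPath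

variable {n : ℕ}

theorem SA_mem_closure (hn : 1 ≤ n) (ρ0 : Fin n → ℝ) (A : Finset ℕ)
    (hA : A ⊆ Finset.range (n - 1)) :
    SA ρ0 A ∈ closure (attainable n (pathEdges n) ρ0) := by
  classical
  have hn0 : 0 < n := hn
  set xk : ℕ → (Fin n → ℝ) := fun k => (sweep n A)^[k] ρ0 with hxk
  have hxkS : ∀ k, xk (k+1) = sweep n A (xk k) := fun k => Function.iterate_succ_apply' _ _ _
  have hatt : ∀ k, xk k ∈ attainable n (pathEdges n) ρ0 := by
    intro k
    induction k with
    | zero => exact ⟨[], by intro p hp; simp at hp, rfl⟩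
    | succ k ih =>
      rw [hxkS k]
      exact foldl_cstep_attain A _ _ ih
  refine mem_closure_of_tendsto (f := xk) (b := Filter.atTop) ?_ (Filter.Eventually.of_forall hatt)
  rw [tendsto_pi_nhds]
  intro j
  obtain ⟨h1, h2, h3, hblk, haout, hbout⟩ := block_facts A hA hn0 j
  set a := blockStart A (j:ℕ) with had
  set b := blockEnd n A (j:ℕ) with hbd2
  have hab : a ≤ b := le_trans h1 h2
  have hbn : b < n := by omega
  have han : a < n := by omega
  have hne : (Finset.Icc a b).Nonempty := ⟨a, Finset.mem_Icc.2 ⟨le_refl a, hab⟩⟩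
  set M : ℕ → ℝ := fun k => (Finset.Icc a b).sup' hne (fun m => ent (xk k) m) with hM
  set mnf : ℕ → ℝ := fun k => (Finset.Icc a b).inf' hne (fun m => ent (xk k) m) with hmn
  have hbound : ∀ k (i : Fin n), a ≤ (i:ℕ) → (i:ℕ) ≤ b → mnf k ≤ xk k i ∧ xk k i ≤ M k := by
    intro k i hai hib
    have hmem : (i:ℕ) ∈ Finset.Icc a b := Finset.mem_Icc.2 ⟨hai, hib⟩
    have h1' := Finset.inf'_le (fun m => ent (xk k) m) hmem
    have h2' := Finset.le_sup' (fun m => ent (xk k) m) hmem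
    simp only [ent_lt (xk k) i.isLt, Fin.eta] at h1' h2'
    exact ⟨h1', h2'⟩
  set δ := ((1:ℝ)/2)^(b-a) with hδd
  have hδpos : 0 < δ := by positivity
  have hδ1 : δ ≤ 1 := pow_le_one₀ (by norm_num) (by norm_num)
  have hcontr : ∀ k, M (k+1) - mnf (k+1) ≤ (1 - δ) * (M k - mnf k) := by
    intro k
    have hb := block_bounds A hA hn0 j (xk k) (mnf k) (M k)
      (fun i hx1 hx2 => hbound k i hx1 hx2)
    have hMk1 : M (k+1) ≤ δ * xk k ⟨a, han⟩ + (1-δ) * M k := by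
      apply Finset.sup'_le
      intro m hm
      rw [Finset.mem_Icc] at hm
      have hmn' : m < n := by omega
      rw [ent_lt _ hmn', hxkS k]
      exact (hb ⟨m, hmn'⟩ hm.1 hm.2).2
    have hmk1 : δ * xk k ⟨a, han⟩ + (1-δ) * mnf k ≤ mnf (k+1) := by
      apply Finset.le_inf'
      intro m hm
      rw [Finset.mem_Icc] at hm
      have hmn' : m < n := by omega
      rw [ent_lt _ hmn', hxkS k]
      exact (hb ⟨m, hmn'⟩ hm.1 hm.2).1
    linarith
  have hgeo : ∀ k, M k - mnf k ≤ (1-δ)^k * (M 0 - mnf 0) := by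
    intro k
    induction k with
    | zero => simp
    | succ k ih =>
      calc M (k+1) - mnf (k+1) ≤ (1-δ) * (M k - mnf k) := hcontr k
        _ ≤ (1-δ) * ((1-δ)^k * (M 0 - mnf 0)) :=
            mul_le_mul_of_nonneg_left ih (by linarith)
        _ = (1-δ)^(k+1) * (M 0 - mnf 0) := by ring
  have hBsum : ∀ k, ∑ m ∈ Finset.Icc a b, ent (xk k) m
      = ∑ m ∈ Finset.Icc a b, ent ρ0 m := by
    intro k
    induction k with
    | zero => rfl
    | succ k ih =>
      rw [hxkS k, block_sum A hA hn0 j (xk k)]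
      exact ih
  have hcard : (Finset.Icc a b).card = b - a + 1 := by rw [Nat.card_Icc]; omega
  have hcardR : (0:ℝ) < ((b - a + 1 : ℕ):ℝ) := by
    have : (0:ℕ) < b - a + 1 := by omega
    exact_mod_cast this
  have hSAj : SA ρ0 A j = (∑ m ∈ Finset.Icc a b, ent ρ0 m) / ((b - a + 1 : ℕ):ℝ) := rfl
  have hμlo : ∀ k, mnf k ≤ SA ρ0 A j := by
    intro k
    rw [hSAj, ← hBsum k, le_div_iff₀ hcardR]
    have hs := Finset.card_nsmul_le_sum (Finset.Icc a b) (fun m => ent (xk k) m) (mnf k)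
      (fun m hm => Finset.inf'_le _ hm)
    rw [nsmul_eq_mul, hcard] at hs
    push_cast at hs ⊢
    linarith
  have hμhi : ∀ k, SA ρ0 A j ≤ M k := by
    intro k
    rw [hSAj, ← hBsum k, div_le_iff₀ hcardR]
    have hs := Finset.sum_le_card_nsmul (Finset.Icc a b) (fun m => ent (xk k) m) (M k)
      (fun m hm => Finset.le_sup' _ hm)
    rw [nsmul_eq_mul, hcard] at hs
    push_cast at hs ⊢
    linarith
  have hdev : ∀ k, |xk k j - SA ρ0 A j| ≤ M k - mnf k := by
    intro k
    have hb1 := hbound k j h1 h2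
    rw [abs_sub_le_iff]
    constructor
    · linarith [hμlo k]
    · linarith [hμhi k]
  have hten : Filter.Tendsto (fun k => (1-δ)^k * (M 0 - mnf 0)) Filter.atTop (nhds 0) := by
    have hg := tendsto_pow_atTop_nhds_zero_of_lt_one (by linarith : (0:ℝ) ≤ 1 - δ)
      (by linarith : (1:ℝ) - δ < 1)
    have := hg.mul_const (M 0 - mnf 0)
    simpa using this
  have habs : Filter.Tendsto (fun k => |xk k j - SA ρ0 A j|) Filter.atTop (nhds 0) :=
    squeeze_zero (fun k => abs_nonneg _) (fun k => le_trans (hdev k) (hgeo k)) hten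
  rw [← tendsto_sub_nhds_zero_iff]
  exact (tendsto_zero_iff_abs_tendsto_zero _).2 habs

theorem extreme_subset (hn : 1 ≤ n) (ρ0 : Fin n → ℝ) (hρ0 : Monotone ρ0) :
    Set.extremePoints ℝ (Kset n ρ0) ⊆
      {σ | ∃ A ⊆ Finset.range (n - 1), σ = SA ρ0 A} := by
  intro x hx
  exact claimB hn hx.1 (claimA hn hρ0 hx)

end AvgPath

/-- For every `n ≥ 1` and every nondecreasing initial vector `ρ0 ∈ ℝ^n`, the closure of
the convex hull of the attainable set for the path graph `P_n` equals the convex hull of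
the finite set `{S_A : A ⊆ {1, …, n-1}}`. -/
theorem closure_convexHull_attainable_path_eq (n : ℕ) (hn : 1 ≤ n)
    (ρ0 : Fin n → ℝ) (hρ0 : Monotone ρ0) :
    closure (convexHull ℝ (attainable n (pathEdges n) ρ0)) =
      convexHull ℝ {σ | ∃ A ⊆ Finset.range (n - 1), σ = SA ρ0 A} := by
  set SAset := {σ | ∃ A ⊆ Finset.range (n - 1), σ = SA ρ0 A} with hSAset
  have hfin : SAset.Finite := by
    have hsub : SAset ⊆ (fun A => SA ρ0 A) '' ((Finset.range (n-1)).powerset : Finset (Finset ℕ)) := by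
      rintro σ ⟨A, hA, rfl⟩
      refine ⟨A, ?_, rfl⟩
      exact Finset.mem_coe.mpr (Finset.mem_powerset.mpr hA)
    exact (Set.Finite.image _ ((Finset.range (n-1)).powerset.finite_toSet)).subset hsub
  apply subset_antisymm
  · have h1 : attainable n (pathEdges n) ρ0 ⊆ AvgPath.Kset n ρ0 :=
      AvgPath.attainable_subset_K hρ0
    have h2 : closure (convexHull ℝ (attainable n (pathEdges n) ρ0)) ⊆ AvgPath.Kset n ρ0 :=
      closure_minimal (convexHull_min h1 (AvgPath.K_convex ρ0)) (AvgPath.K_closed ρ0)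
    have hKM := closure_convexHull_extremePoints (AvgPath.K_compact (ρ0 := ρ0) hn)
      (AvgPath.K_convex ρ0)
    have h3 : AvgPath.Kset n ρ0 ⊆ convexHull ℝ SAset := by
      calc AvgPath.Kset n ρ0
          = closure (convexHull ℝ (Set.extremePoints ℝ (AvgPath.Kset n ρ0))) := hKM.symm
        _ ⊆ closure (convexHull ℝ SAset) :=
            closure_mono (convexHull_mono (AvgPath.extreme_subset hn ρ0 hρ0))
        _ = convexHull ℝ SAset := IsClosed.closure_eq (hfin.isClosed_convexHull ℝ)
    exact h2.trans h3
  · refine convexHull_min ?_ ((convex_convexHull ℝ _).closure)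
    rintro σ ⟨A, hA, rfl⟩
    exact closure_mono (subset_convexHull ℝ _) (AvgPath.SA_mem_closure hn ρ0 A hA)
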